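/- For any α ∈ Z(U(gl_2)), the endomorphisms F and G satisfy G(F(α)) = F(G(α)) + 2F(F(α)). -/

import Mathlib

set_option maxHeartbeats 1000000

theorem stmt9 {k : Type} [Field k] [CharZero k] {A : Type} [Ring A] [Algebra k A]
    (ee ff hh tt xx yy : A)
    (hHE : ⁅hh, ee⁆ = 2*ee) (hHF : ⁅hh, ff⁆ = -(2*ff)) (hEF : ⁅ee, ff⁆ = hh)
    (hTE : ⁅tt, ee⁆ = 0) (hTF : ⁅tt, ff⁆ = 0) (hTH : ⁅tt, hh⁆ = 0)
    (hEX : ⁅ee, xx⁆ = 0) (hEY : ⁅ee, yy⁆ = xx)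
    (hFX : ⁅ff, xx⁆ = yy) (hFY : ⁅ff, yy⁆ = 0)
    (hHX : ⁅hh, xx⁆ = xx) (hHY : ⁅hh, yy⁆ = -yy)
    (hTX : ⁅tt, xx⁆ = xx) (hTY : ⁅tt, yy⁆ = yy)
    (hXY : ⁅xx, yy⁆ = 0)
    (hgen : Algebra.adjoin k ({ee, ff, hh, tt, xx, yy} : Set A) = ⊤)
    (hPBW : LinearIndependent k (fun m : Fin 6 → ℕ =>
      ee ^ m 0 * ff ^ m 1 * hh ^ m 2 * tt ^ m 3 * xx ^ m 4 * yy ^ m 5))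
    (α fa ga ffa gfa fga gga : A)
    (hαmem : α ∈ Algebra.adjoin k ({ee, ff, hh, tt} : Set A))
    (hαc : ∀ u ∈ Algebra.adjoin k ({ee, ff, hh, tt} : Set A), α * u = u * α)
    (hfamem : fa ∈ Algebra.adjoin k ({ee, ff, hh, tt} : Set A))
    (hfac : ∀ u ∈ Algebra.adjoin k ({ee, ff, hh, tt} : Set A), fa * u = u * fa)
    (hgamem : ga ∈ Algebra.adjoin k ({ee, ff, hh, tt} : Set A))
    (hgac : ∀ u ∈ Algebra.adjoin k ({ee, ff, hh, tt} : Set A), ga * u = u * ga)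
    (hffamem : ffa ∈ Algebra.adjoin k ({ee, ff, hh, tt} : Set A))
    (hffac : ∀ u ∈ Algebra.adjoin k ({ee, ff, hh, tt} : Set A), ffa * u = u * ffa)
    (hgfamem : gfa ∈ Algebra.adjoin k ({ee, ff, hh, tt} : Set A))
    (hgfac : ∀ u ∈ Algebra.adjoin k ({ee, ff, hh, tt} : Set A), gfa * u = u * gfa)
    (hfgamem : fga ∈ Algebra.adjoin k ({ee, ff, hh, tt} : Set A))
    (hfgac : ∀ u ∈ Algebra.adjoin k ({ee, ff, hh, tt} : Set A), fga * u = u * fga)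
    (hggamem : gga ∈ Algebra.adjoin k ({ee, ff, hh, tt} : Set A))
    (hggac : ∀ u ∈ Algebra.adjoin k ({ee, ff, hh, tt} : Set A), gga * u = u * gga)
    (hα : ⁅α, xx⁆ = (2*hh*fa + ga)*xx + 4*ee*fa*yy)
    (hfa : ⁅fa, xx⁆ = (2*hh*ffa + gfa)*xx + 4*ee*ffa*yy)
    (hga : ⁅ga, xx⁆ = (2*hh*fga + gga)*xx + 4*ee*fga*yy) :
    gfa = fga + 2*ffa := by
  have m_ee : ee ∈ Algebra.adjoin k ({ee,ff,hh,tt} : Set A) := Algebra.subset_adjoin (by simp)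
  have m_ff : ff ∈ Algebra.adjoin k ({ee,ff,hh,tt} : Set A) := Algebra.subset_adjoin (by simp)
  have m_hh : hh ∈ Algebra.adjoin k ({ee,ff,hh,tt} : Set A) := Algebra.subset_adjoin (by simp)
  have m_tt : tt ∈ Algebra.adjoin k ({ee,ff,hh,tt} : Set A) := Algebra.subset_adjoin (by simp)
  have rBx_al : xx*α - (α*xx - ((2*hh*fa + ga)*xx + 4*ee*fa*yy)) = 0 := by
    have h := hα; rw [Ring.lie_def] at h
    rw [show xx*α - (α*xx - ((2*hh*fa + ga)*xx + 4*ee*fa*yy)) = -((α*xx - xx*α) - ((2*hh*fa + ga)*xx + 4*ee*fa*yy)) from by noncomm_ring, h, sub_self, neg_zero]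
  have rBx_fa : xx*fa - (fa*xx - ((2*hh*ffa + gfa)*xx + 4*ee*ffa*yy)) = 0 := by
    have h := hfa; rw [Ring.lie_def] at h
    rw [show xx*fa - (fa*xx - ((2*hh*ffa + gfa)*xx + 4*ee*ffa*yy)) = -((fa*xx - xx*fa) - ((2*hh*ffa + gfa)*xx + 4*ee*ffa*yy)) from by noncomm_ring, h, sub_self, neg_zero]
  have rBx_ga : xx*ga - (ga*xx - ((2*hh*fga + gga)*xx + 4*ee*fga*yy)) = 0 := by
    have h := hga; rw [Ring.lie_def] at h
    rw [show xx*ga - (ga*xx - ((2*hh*fga + gga)*xx + 4*ee*fga*yy)) = -((ga*xx - xx*ga) - ((2*hh*fga + gga)*xx + 4*ee*fga*yy)) from by noncomm_ring, h, sub_self, neg_zero]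
  have rC_al_f : ff*α - α*ff = 0 := by rw [hαc ff m_ff]; exact sub_self _
  have rC_fa_e : ee*fa - fa*ee = 0 := by rw [hfac ee m_ee]; exact sub_self _
  have rC_fa_f : ff*fa - fa*ff = 0 := by rw [hfac ff m_ff]; exact sub_self _
  have rC_fa_h : hh*fa - fa*hh = 0 := by rw [hfac hh m_hh]; exact sub_self _
  have rC_ffa_e : ee*ffa - ffa*ee = 0 := by rw [hffac ee m_ee]; exact sub_self _
  have rC_ffa_f : ff*ffa - ffa*ff = 0 := by rw [hffac ff m_ff]; exact sub_self _
  have rC_ffa_h : hh*ffa - ffa*hh = 0 := by rw [hffac hh m_hh]; exact sub_self _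
  have rC_fga_e : ee*fga - fga*ee = 0 := by rw [hfgac ee m_ee]; exact sub_self _
  have rC_fga_f : ff*fga - fga*ff = 0 := by rw [hfgac ff m_ff]; exact sub_self _
  have rC_fga_h : hh*fga - fga*hh = 0 := by rw [hfgac hh m_hh]; exact sub_self _
  have rC_ga_f : ff*ga - ga*ff = 0 := by rw [hgac ff m_ff]; exact sub_self _
  have rC_gfa_e : ee*gfa - gfa*ee = 0 := by rw [hgfac ee m_ee]; exact sub_self _
  have rC_gfa_f : ff*gfa - gfa*ff = 0 := by rw [hgfac ff m_ff]; exact sub_self _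
  have rC_gfa_h : hh*gfa - gfa*hh = 0 := by rw [hgfac hh m_hh]; exact sub_self _
  have rC_gga_f : ff*gga - gga*ff = 0 := by rw [hggac ff m_ff]; exact sub_self _
  have rP_fe : ff*ee - (ee*ff - hh) = 0 := by
    have h := hEF; rw [Ring.lie_def] at h
    rw [show ff*ee - (ee*ff - hh) = -((ee*ff - ff*ee) - (hh)) from by noncomm_ring, h, sub_self, neg_zero]
  have rP_he : hh*ee - (ee*hh + 2*ee) = 0 := by
    have h := hHE; rw [Ring.lie_def] at h
    rw [show hh*ee - (ee*hh + 2*ee) = (hh*ee - ee*hh) - (2*ee) from by noncomm_ring, h, sub_self]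
  have rP_hf : hh*ff - (ff*hh - 2*ff) = 0 := by
    have h := hHF; rw [Ring.lie_def] at h
    rw [show hh*ff - (ff*hh - 2*ff) = (hh*ff - ff*hh) - (-(2*ff)) from by noncomm_ring, h, sub_self]
  have rP_xf : xx*ff - (ff*xx - yy) = 0 := by
    have h := hFX; rw [Ring.lie_def] at h
    rw [show xx*ff - (ff*xx - yy) = -((ff*xx - xx*ff) - (yy)) from by noncomm_ring, h, sub_self, neg_zero]
  have rP_xh : xx*hh - (hh*xx - xx) = 0 := by
    have h := hHX; rw [Ring.lie_def] at h
    rw [show xx*hh - (hh*xx - xx) = -((hh*xx - xx*hh) - (xx)) from by noncomm_ring, h, sub_self, neg_zero]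
  have rP_ye : yy*ee - (ee*yy - xx) = 0 := by
    have h := hEY; rw [Ring.lie_def] at h
    rw [show yy*ee - (ee*yy - xx) = -((ee*yy - yy*ee) - (xx)) from by noncomm_ring, h, sub_self, neg_zero]
  have rP_yf : yy*ff - ff*yy = 0 := by
    have h := hFY; rw [Ring.lie_def] at h
    rw [show yy*ff - ff*yy = -((ff*yy - yy*ff) - ((0:A))) from by noncomm_ring, h, sub_self, neg_zero]
  have rP_yh : yy*hh - (hh*yy + yy) = 0 := by
    have h := hHY; rw [Ring.lie_def] at h
    rw [show yy*hh - (hh*yy + yy) = -((hh*yy - yy*hh) - (-yy)) from by noncomm_ring, h, sub_self, neg_zero]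
  have rP_yx : yy*xx - xx*yy = 0 := by
    have h := hXY; rw [Ring.lie_def] at h
    rw [show yy*xx - xx*yy = -((xx*yy - yy*xx) - ((0:A))) from by noncomm_ring, h, sub_self, neg_zero]
  have stepfa : fa*(ff*xx - xx*ff) - (ff*xx - xx*ff)*fa - (4*ff*ffa*xx + (gfa - 2*hh*ffa)*(ff*xx - xx*ff)) = (1)*(xx*fa - (fa*xx - ((2*hh*ffa + gfa)*xx + 4*ee*ffa*yy)))*ff + (-1)*(ff*fa - fa*ff)*xx + (-4)*(ee*ffa - ffa*ee)*ff*yy + (4)*(ff*ffa - ffa*ff)*ee*yy + (2)*(ff*ffa - ffa*ff)*hh*xx + (-4)*(ff*ffa - ffa*ff)*xx + (-2)*(hh*ffa - ffa*hh)*ff*xx + (4)*(hh*ffa - ffa*hh)*yy + (1)*(ff*gfa - gfa*ff)*xx + (-4)*ee*ffa*(yy*ff - ff*yy) + (-1)*ff*(xx*fa - (fa*xx - ((2*hh*ffa + gfa)*xx + 4*ee*ffa*yy))) + (4)*ff*(ee*ffa - ffa*ee)*yy + (2)*ff*(hh*ffa - ffa*hh)*xx + (4)*ffa*(ff*ee -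 (ee*ff - hh))*yy + (-2)*ffa*(hh*ff - (ff*hh - 2*ff))*xx + (-4)*hh*ffa*(xx*ff - (ff*xx - yy)) + (1)*xx*(ff*fa - fa*ff) := by noncomm_ring
  have stepfa0 : fa*(ff*xx - xx*ff) - (ff*xx - xx*ff)*fa - (4*ff*ffa*xx + (gfa - 2*hh*ffa)*(ff*xx - xx*ff)) = 0 := by
    rw [stepfa]
    simp only [rBx_fa, rC_fa_f, rC_ffa_e, rC_ffa_f, rC_ffa_h, rC_gfa_f, rP_fe, rP_hf, rP_xf, rP_yf, mul_zero, zero_mul, add_zero, zero_add]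
  have D_fa : fa*yy - yy*fa = 4*ff*ffa*xx + (gfa - 2*hh*ffa)*yy := by
    have h6 : yy = ff*xx - xx*ff := by have h := hFX; rw [Ring.lie_def] at h; exact h.symm
    have e1 : fa*yy - yy*fa - (4*ff*ffa*xx + (gfa - 2*hh*ffa)*yy) = 0 := by rw [h6]; exact stepfa0
    exact sub_eq_zero.mp e1
  have rBy_fa : yy*fa - (fa*yy - (4*ff*ffa*xx + (gfa - 2*hh*ffa)*yy)) = 0 := by rw [show yy*fa - (fa*yy - (4*ff*ffa*xx + (gfa - 2*hh*ffa)*yy)) = -((fa*yy - yy*fa) - (4*ff*ffa*xx + (gfa - 2*hh*ffa)*yy)) from by noncomm_ring, D_fa, sub_self, neg_zero]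
  have stepga : ga*(ff*xx - xx*ff) - (ff*xx - xx*ff)*ga - (4*ff*fga*xx + (gga - 2*hh*fga)*(ff*xx - xx*ff)) = (1)*(xx*ga - (ga*xx - ((2*hh*fga + gga)*xx + 4*ee*fga*yy)))*ff + (-4)*(ee*fga - fga*ee)*ff*yy + (4)*(ff*fga - fga*ff)*ee*yy + (2)*(ff*fga - fga*ff)*hh*xx + (-4)*(ff*fga - fga*ff)*xx + (-2)*(hh*fga - fga*hh)*ff*xx + (4)*(hh*fga - fga*hh)*yy + (-1)*(ff*ga - ga*ff)*xx + (1)*(ff*gga - gga*ff)*xx + (-4)*ee*fga*(yy*ff - ff*yy) + (-1)*ff*(xx*ga - (ga*xx - ((2*hh*fga + gga)*xx + 4*ee*fga*yy))) + (4)*ff*(ee*fga - fga*ee)*yy + (2)*ff*(hh*fga - fga*hh)*xx + (4)*fga*(ff*ee - (ee*ff - hh))*yy + (-2)*fga*(hh*ff - (ff*hh - 2*ff))*xx + (-4)*hh*fga*(xx*ff - (ff*xx - yy)) + (1)*xx*(ff*ga - ga*ff) := by noncomm_ring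
  have stepga0 : ga*(ff*xx - xx*ff) - (ff*xx - xx*ff)*ga - (4*ff*fga*xx + (gga - 2*hh*fga)*(ff*xx - xx*ff)) = 0 := by
    rw [stepga]
    simp only [rBx_ga, rC_fga_e, rC_fga_f, rC_fga_h, rC_ga_f, rC_gga_f, rP_fe, rP_hf, rP_xf, rP_yf, mul_zero, zero_mul, add_zero, zero_add]
  have D_ga : ga*yy - yy*ga = 4*ff*fga*xx + (gga - 2*hh*fga)*yy := by
    have h6 : yy = ff*xx - xx*ff := by have h := hFX; rw [Ring.lie_def] at h; exact h.symm
    have e1 : ga*yy - yy*ga - (4*ff*fga*xx + (gga - 2*hh*fga)*yy) = 0 := by rw [h6]; exact stepga0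
    exact sub_eq_zero.mp e1
  have rBy_ga : yy*ga - (ga*yy - (4*ff*fga*xx + (gga - 2*hh*fga)*yy)) = 0 := by rw [show yy*ga - (ga*yy - (4*ff*fga*xx + (gga - 2*hh*fga)*yy)) = -((ga*yy - yy*ga) - (4*ff*fga*xx + (gga - 2*hh*fga)*yy)) from by noncomm_ring, D_ga, sub_self, neg_zero]
  have stepal : α*(ff*xx - xx*ff) - (ff*xx - xx*ff)*α - (4*ff*fa*xx + (ga - 2*hh*fa)*(ff*xx - xx*ff)) = (1)*(xx*α - (α*xx - ((2*hh*fa + ga)*xx + 4*ee*fa*yy)))*ff + (-1)*(ff*α - α*ff)*xx + (-4)*(ee*fa - fa*ee)*ff*yy + (4)*(ff*fa - fa*ff)*ee*yy + (2)*(ff*fa - fa*ff)*hh*xx + (-4)*(ff*fa - fa*ff)*xx + (-2)*(hh*fa - fa*hh)*ff*xx + (4)*(hh*fa - fa*hh)*yy + (1)*(ff*ga - ga*ff)*xx + (-4)*ee*fa*(yy*ff - ff*yy) + (-1)*ff*(xx*α - (α*xx - ((2*hh*fa + ga)*xx + 4*ee*fa*yy))) + (4)*ff*(ee*fa - fa*ee)*yy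 + (2)*ff*(hh*fa - fa*hh)*xx + (4)*fa*(ff*ee - (ee*ff - hh))*yy + (-2)*fa*(hh*ff - (ff*hh - 2*ff))*xx + (-4)*hh*fa*(xx*ff - (ff*xx - yy)) + (1)*xx*(ff*α - α*ff) := by noncomm_ring
  have stepal0 : α*(ff*xx - xx*ff) - (ff*xx - xx*ff)*α - (4*ff*fa*xx + (ga - 2*hh*fa)*(ff*xx - xx*ff)) = 0 := by
    rw [stepal]
    simp only [rBx_al, rC_al_f, rC_fa_e, rC_fa_f, rC_fa_h, rC_ga_f, rP_fe, rP_hf, rP_xf, rP_yf, mul_zero, zero_mul, add_zero, zero_add]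
  have D_al : α*yy - yy*α = 4*ff*fa*xx + (ga - 2*hh*fa)*yy := by
    have h6 : yy = ff*xx - xx*ff := by have h := hFX; rw [Ring.lie_def] at h; exact h.symm
    have e1 : α*yy - yy*α - (4*ff*fa*xx + (ga - 2*hh*fa)*yy) = 0 := by rw [h6]; exact stepal0
    exact sub_eq_zero.mp e1
  have rBy_al : yy*α - (α*yy - (4*ff*fa*xx + (ga - 2*hh*fa)*yy)) = 0 := by rw [show yy*α - (α*yy - (4*ff*fa*xx + (ga - 2*hh*fa)*yy)) = -((α*yy - yy*α) - (4*ff*fa*xx + (ga - 2*hh*fa)*yy)) from by noncomm_ring, D_al, sub_self, neg_zero]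
  have KEYM : 4*(((gfa - fga - 2*ffa)*ee)*(yy*yy) - ((gfa - fga - 2*ffa)*ff)*(xx*xx) + ((gfa - fga - 2*ffa)*hh)*(xx*yy)) = (1)*(xx*α - (α*xx - ((2*hh*fa + ga)*xx + 4*ee*fa*yy)))*yy + (-2)*(xx*fa - (fa*xx - ((2*hh*ffa + gfa)*xx + 4*ee*ffa*yy)))*yy + (-1)*(xx*ga - (ga*xx - ((2*hh*fga + gga)*xx + 4*ee*fga*yy)))*yy + (4)*(yy*fa - (fa*yy - (4*ff*ffa*xx + (gfa - 2*hh*ffa)*yy)))*xx + (-4)*(ee*fa - fa*ee)*yy*yy + (-4)*(ff*fa - fa*ff)*xx*xx + (16)*(ee*ffa - ffa*ee)*ff*yy*xx + (-8)*(ee*ffa - ffa*ee)*hh*yy*yy + (-8)*(ee*ffa - ffa*ee)*yy*yy + (8)*(ff*ffa - ffa*ff)*hh*xx*xx + (-16)*(ff*ffa - ffa*ff)*xx*xx + (-4)*(hh*ffa - ffa*hh)*hh*xx*yy + (4)*(hh*ffa - ffa*hh)*xx*yy + (-8)*(hh*ffa - ffa*hh)*yy*xx + (4)*(ee*fga - fga*ee)*yy*yy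 + (2)*(hh*fga - fga*hh)*xx*yy + (4)*(ff*gfa - gfa*ff)*xx*xx + (-2)*(hh*gfa - gfa*hh)*xx*yy + (16)*(ff*ee - (ee*ff - hh))*ffa*yy*xx + (-8)*(hh*ee - (ee*hh + 2*ee))*ffa*yy*yy + (-4)*(xx*ff - (ff*xx - yy))*fa*xx + (2)*(xx*hh - (hh*xx - xx))*fa*yy + (1)*(yy*xx - xx*yy)*α + (16)*ee*(ff*ffa - ffa*ff)*yy*xx + (-8)*ee*(hh*ffa - ffa*hh)*yy*yy + (-4)*ff*(xx*fa - (fa*xx - ((2*hh*ffa + gfa)*xx + 4*ee*ffa*yy)))*xx + (8)*ff*(hh*ffa - ffa*hh)*xx*xx + (4)*fa*(yy*xx - xx*yy) + (16)*ffa*ee*ff*(yy*xx - xx*yy) + (-8)*ffa*hh*(yy*xx - xx*yy) + (-4)*gfa*(yy*xx - xx*yy) + (2)*hh*(xx*fa - (fa*xx - ((2*hh*ffa + gfa)*xx + 4*ee*ffa*yy)))*yy + (-4)*hh*(hh*ffa - ffa*hh)*xx*yy + (1)*xx*(yy*α - (α*yy - (4*ff*fa*xx + (ga - 2*hh*fa)*yy)))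 - ((4)*(xx*fa - (fa*xx - ((2*hh*ffa + gfa)*xx + 4*ee*ffa*yy)))*yy + (1)*(yy*α - (α*yy - (4*ff*fa*xx + (ga - 2*hh*fa)*yy)))*xx + (-2)*(yy*fa - (fa*yy - (4*ff*ffa*xx + (gfa - 2*hh*ffa)*yy)))*xx + (-1)*(yy*ga - (ga*yy - (4*ff*fga*xx + (gga - 2*hh*fga)*yy)))*xx + (-4)*(ee*fa - fa*ee)*yy*yy + (-4)*(ff*fa - fa*ff)*xx*xx + (16)*(ee*ffa - ffa*ee)*ff*xx*yy + (-8)*(ee*ffa - ffa*ee)*hh*yy*yy + (-16)*(ee*ffa - ffa*ee)*yy*yy + (8)*(ff*ffa - ffa*ff)*hh*xx*xx + (-8)*(ff*ffa - ffa*ff)*xx*xx + (-4)*(hh*ffa - ffa*hh)*hh*yy*xx + (-8)*(hh*ffa - ffa*hh)*xx*yy + (-4)*(hh*ffa - ffa*hh)*yy*xx + (4)*(ff*fga - fga*ff)*xx*xx + (-2)*(hh*fga - fga*hh)*yy*xx + (4)*(ee*gfa - gfa*ee)*yy*yy + (2)*(hh*gfa - gfa*hh)*yy*xx + (8)*(hh*ff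 - (ff*hh - 2*ff))*ffa*xx*xx + (-4)*(yy*ee - (ee*yy - xx))*fa*yy + (-2)*(yy*hh - (hh*yy + yy))*fa*xx + (1)*α*(yy*xx - xx*yy) + (-4)*ee*(yy*fa - (fa*yy - (4*ff*ffa*xx + (gfa - 2*hh*ffa)*yy)))*yy + (16)*ee*(ff*ffa - ffa*ff)*xx*yy + (-8)*ee*(hh*ffa - ffa*hh)*yy*yy + (8)*ff*(hh*ffa - ffa*hh)*xx*xx + (-2)*fa*(yy*xx - xx*yy) + (-4)*ffa*hh*(yy*xx - xx*yy) + (-4)*ffa*hh*hh*(yy*xx - xx*yy) + (-2)*fga*hh*(yy*xx - xx*yy) + (-2)*ga*(yy*xx - xx*yy) + (2)*gfa*(yy*xx - xx*yy) + (2)*gfa*hh*(yy*xx - xx*yy) + (1)*gga*(yy*xx - xx*yy) + (-2)*hh*(yy*fa - (fa*yy - (4*ff*ffa*xx + (gfa - 2*hh*ffa)*yy)))*xx + (-4)*hh*(hh*ffa - ffa*hh)*yy*xx) - yy*(xx*α - (α*xx - ((2*hh*fa + ga)*xx + 4*ee*fa*yy))) := by noncomm_ring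
  have hT4 : 4*(((gfa - fga - 2*ffa)*ee)*(yy*yy) - ((gfa - fga - 2*ffa)*ff)*(xx*xx) + ((gfa - fga - 2*ffa)*hh)*(xx*yy)) = 0 := by
    rw [KEYM]
    simp only [rBx_al, rBx_fa, rBx_ga, rBy_al, rBy_fa, rBy_ga, rC_fa_e, rC_fa_f, rC_ffa_e, rC_ffa_f, rC_ffa_h, rC_fga_e, rC_fga_f, rC_fga_h, rC_gfa_e, rC_gfa_f, rC_gfa_h, rP_fe, rP_he, rP_hf, rP_xf, rP_xh, rP_ye, rP_yh, rP_yx, mul_zero, zero_mul, add_zero, zero_add, sub_zero, zero_sub, neg_zero]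
  have hT : ((gfa - fga - 2*ffa)*ee)*(yy*yy) - ((gfa - fga - 2*ffa)*ff)*(xx*xx) + ((gfa - fga - 2*ffa)*hh)*(xx*yy) = 0 := by
    have h4 : ((4:k)) • (((gfa - fga - 2*ffa)*ee)*(yy*yy) - ((gfa - fga - 2*ffa)*ff)*(xx*xx) + ((gfa - fga - 2*ffa)*hh)*(xx*yy)) = (0:A) := by
      rw [Algebra.smul_def, map_ofNat]; exact hT4
    calc ((gfa - fga - 2*ffa)*ee)*(yy*yy) - ((gfa - fga - 2*ffa)*ff)*(xx*xx) + ((gfa - fga - 2*ffa)*hh)*(xx*yy) = ((4:k)⁻¹*4) • (((gfa - fga - 2*ffa)*ee)*(yy*yy) - ((gfa - fga - 2*ffa)*ff)*(xx*xx) + ((gfa - fga - 2*ffa)*hh)*(xx*yy)) := by norm_num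
      _ = (4:k)⁻¹ • (((4:k)) • (((gfa - fga - 2*ffa)*ee)*(yy*yy) - ((gfa - fga - 2*ffa)*ff)*(xx*xx) + ((gfa - fga - 2*ffa)*hh)*(xx*yy))) := by rw [smul_smul]
      _ = (4:k)⁻¹ • (0:A) := by rw [h4]
      _ = 0 := smul_zero _
  -- ===== mul-form commutation lemmas for straightening =====
  have cFE : ff*ee = ee*ff - hh := sub_eq_zero.mp (by
    rw [show ff*ee - (ee*ff - hh) = -((ee*ff - ff*ee) - hh) from by noncomm_ring]
    have h := hEF; rw [Ring.lie_def] at h; rw [h, sub_self, neg_zero])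
  have cHE : hh*ee = ee*hh + 2*ee := sub_eq_zero.mp rP_he
  have cHF : hh*ff = ff*hh - 2*ff := sub_eq_zero.mp rP_hf
  have cTE : tt*ee = ee*tt := by
    have h := hTE; rw [Ring.lie_def] at h; exact sub_eq_zero.mp h
  have cTF : tt*ff = ff*tt := by
    have h := hTF; rw [Ring.lie_def] at h; exact sub_eq_zero.mp h
  have cTH : tt*hh = hh*tt := by
    have h := hTH; rw [Ring.lie_def] at h; exact sub_eq_zero.mp h
  have cte : ∀ d : ℕ, tt^d*ee = ee*tt^d := fun d => ((Commute.pow_left (cTE : Commute tt ee) d).eq)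
  have ctf : ∀ d : ℕ, tt^d*ff = ff*tt^d := fun d => ((Commute.pow_left (cTF : Commute tt ff) d).eq)
  have cth : ∀ d : ℕ, tt^d*hh = hh*tt^d := fun d => ((Commute.pow_left (cTH : Commute tt hh) d).eq)
  -- ===== straightening =====
  set P : Submodule k A := Submodule.span k
    (Set.range (fun m : ℕ×ℕ×ℕ×ℕ => ee^m.1*ff^m.2.1*hh^m.2.2.1*tt^m.2.2.2)) with hP
  have hmono : ∀ a b c d : ℕ, ee^a*ff^b*hh^c*tt^d ∈ P := by
    intro a b c d; rw [hP]; exact Submodule.subset_span ⟨(a,b,c,d), rfl⟩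
  have eqT : ∀ a b c d : ℕ, (ee^a*ff^b*hh^c*tt^d)*tt = ee^a*ff^b*hh^c*tt^(d+1) := by
    intro a b c d; rw [pow_succ]; noncomm_ring
  have eqH : ∀ a b c d : ℕ, (ee^a*ff^b*hh^c*tt^d)*hh = ee^a*ff^b*hh^(c+1)*tt^d := by
    intro a b c d
    calc (ee^a*ff^b*hh^c*tt^d)*hh = (ee^a*ff^b*hh^c)*(tt^d*hh) := by noncomm_ring
      _ = (ee^a*ff^b*hh^c)*(hh*tt^d) := by rw [cth d]
      _ = ee^a*ff^b*hh^(c+1)*tt^d := by rw [pow_succ]; noncomm_ring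
  have mulT : ∀ p ∈ P, p*tt ∈ P := by
    intro p hp
    induction hp using Submodule.span_induction with
    | mem x hx =>
        obtain ⟨⟨a,b,c,d⟩, rfl⟩ := hx
        show (ee^a*ff^b*hh^c*tt^d)*tt ∈ P
        rw [eqT]; exact hmono a b c (d+1)
    | zero => rw [zero_mul]; exact P.zero_mem
    | add x y hx hy ihx ihy => rw [add_mul]; exact add_mem ihx ihy
    | smul r x hx ihx => rw [smul_mul_assoc]; exact Submodule.smul_mem P r ihx
  have mulH : ∀ p ∈ P, p*hh ∈ P := by
    intro p hp
    induction hp using Submodule.span_induction with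
    | mem x hx =>
        obtain ⟨⟨a,b,c,d⟩, rfl⟩ := hx
        show (ee^a*ff^b*hh^c*tt^d)*hh ∈ P
        rw [eqH]; exact hmono a b (c+1) d
    | zero => rw [zero_mul]; exact P.zero_mem
    | add x y hx hy ihx ihy => rw [add_mul]; exact add_mem ihx ihy
    | smul r x hx ihx => rw [smul_mul_assoc]; exact Submodule.smul_mem P r ihx
  have mulTpow : ∀ d : ℕ, ∀ p ∈ P, p*tt^d ∈ P := by
    intro d
    induction d with
    | zero => intro p hp; rw [pow_zero, mul_one]; exact hp
    | succ n ih =>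
        intro p hp
        have e : p*tt^(n+1) = (p*tt^n)*tt := by rw [pow_succ]; noncomm_ring
        rw [e]; exact mulT _ (ih p hp)
  have claimF : ∀ c : ℕ, ∀ a b : ℕ, (ee^a*ff^b*hh^c)*ff ∈ P := by
    intro c
    induction c with
    | zero =>
        intro a b
        have e0 : (ee^a*ff^b*hh^0)*ff = ee^a*ff^(b+1)*hh^0*tt^0 := by
          simp only [pow_zero, pow_succ, mul_one]; noncomm_ring
        rw [e0]; exact hmono a (b+1) 0 0
    | succ c ih =>
        intro a b
        have e1 : (ee^a*ff^b*hh^(c+1))*ff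
            = ((ee^a*ff^b*hh^c)*ff)*hh - 2*((ee^a*ff^b*hh^c)*ff) := by
          calc (ee^a*ff^b*hh^(c+1))*ff = (ee^a*ff^b*hh^c)*(hh*ff) := by
                rw [pow_succ]; noncomm_ring
            _ = (ee^a*ff^b*hh^c)*(ff*hh - 2*ff) := by rw [cHF]
            _ = ((ee^a*ff^b*hh^c)*ff)*hh - 2*((ee^a*ff^b*hh^c)*ff) := by noncomm_ring
        rw [e1]
        exact sub_mem (mulH _ (ih a b)) (by rw [two_mul]; exact add_mem (ih a b) (ih a b))
  have mulF : ∀ p ∈ P, p*ff ∈ P := by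
    intro p hp
    induction hp using Submodule.span_induction with
    | mem x hx =>
        obtain ⟨⟨a,b,c,d⟩, rfl⟩ := hx
        show (ee^a*ff^b*hh^c*tt^d)*ff ∈ P
        have e : (ee^a*ff^b*hh^c*tt^d)*ff = ((ee^a*ff^b*hh^c)*ff)*tt^d := by
          calc (ee^a*ff^b*hh^c*tt^d)*ff = (ee^a*ff^b*hh^c)*(tt^d*ff) := by noncomm_ring
            _ = (ee^a*ff^b*hh^c)*(ff*tt^d) := by rw [ctf d]
            _ = ((ee^a*ff^b*hh^c)*ff)*tt^d := by noncomm_ring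
        rw [e]; exact mulTpow d _ (claimF c a b)
    | zero => rw [zero_mul]; exact P.zero_mem
    | add x y hx hy ihx ihy => rw [add_mul]; exact add_mem ihx ihy
    | smul r x hx ihx => rw [smul_mul_assoc]; exact Submodule.smul_mem P r ihx
  have claimFB : ∀ b : ℕ, ∀ a : ℕ, (ee^a*ff^b)*ee ∈ P := by
    intro b
    induction b with
    | zero =>
        intro a
        have e0 : (ee^a*ff^0)*ee = ee^(a+1)*ff^0*hh^0*tt^0 := by
          simp only [pow_zero, pow_succ, mul_one]
        rw [e0]; exact hmono (a+1) 0 0 0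
    | succ b ih =>
        intro a
        have e1 : (ee^a*ff^(b+1))*ee = ((ee^a*ff^b)*ee)*ff - ee^a*ff^b*hh^1*tt^0 := by
          calc (ee^a*ff^(b+1))*ee = (ee^a*ff^b)*(ff*ee) := by rw [pow_succ]; noncomm_ring
            _ = (ee^a*ff^b)*(ee*ff - hh) := by rw [cFE]
            _ = ((ee^a*ff^b)*ee)*ff - ee^a*ff^b*hh^1*tt^0 := by
                simp only [pow_one, pow_zero, mul_one]; noncomm_ring
        rw [e1]; exact sub_mem (mulF _ (ih a)) (hmono a b 1 0)
  have claimE : ∀ c : ℕ, ∀ a b : ℕ, (ee^a*ff^b*hh^c)*ee ∈ P := by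
    intro c
    induction c with
    | zero =>
        intro a b
        have e0 : (ee^a*ff^b*hh^0)*ee = (ee^a*ff^b)*ee := by rw [pow_zero, mul_one]
        rw [e0]; exact claimFB b a
    | succ c ih =>
        intro a b
        have e1 : (ee^a*ff^b*hh^(c+1))*ee
            = ((ee^a*ff^b*hh^c)*ee)*hh + 2*((ee^a*ff^b*hh^c)*ee) := by
          calc (ee^a*ff^b*hh^(c+1))*ee = (ee^a*ff^b*hh^c)*(hh*ee) := by
                rw [pow_succ]; noncomm_ring
            _ = (ee^a*ff^b*hh^c)*(ee*hh + 2*ee) := by rw [cHE]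
            _ = ((ee^a*ff^b*hh^c)*ee)*hh + 2*((ee^a*ff^b*hh^c)*ee) := by noncomm_ring
        rw [e1]
        exact add_mem (mulH _ (ih a b)) (by rw [two_mul]; exact add_mem (ih a b) (ih a b))
  have mulE : ∀ p ∈ P, p*ee ∈ P := by
    intro p hp
    induction hp using Submodule.span_induction with
    | mem x hx =>
        obtain ⟨⟨a,b,c,d⟩, rfl⟩ := hx
        show (ee^a*ff^b*hh^c*tt^d)*ee ∈ P
        have e : (ee^a*ff^b*hh^c*tt^d)*ee = ((ee^a*ff^b*hh^c)*ee)*tt^d := by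
          calc (ee^a*ff^b*hh^c*tt^d)*ee = (ee^a*ff^b*hh^c)*(tt^d*ee) := by noncomm_ring
            _ = (ee^a*ff^b*hh^c)*(ee*tt^d) := by rw [cte d]
            _ = ((ee^a*ff^b*hh^c)*ee)*tt^d := by noncomm_ring
        rw [e]; exact mulTpow d _ (claimE c a b)
    | zero => rw [zero_mul]; exact P.zero_mem
    | add x y hx hy ihx ihy => rw [add_mul]; exact add_mem ihx ihy
    | smul r x hx ihx => rw [smul_mul_assoc]; exact Submodule.smul_mem P r ihx
  have mulEpow : ∀ n : ℕ, ∀ p ∈ P, p*ee^n ∈ P := by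
    intro n
    induction n with
    | zero => intro p hp; rw [pow_zero, mul_one]; exact hp
    | succ n ih =>
        intro p hp
        have e : p*ee^(n+1) = (p*ee^n)*ee := by rw [pow_succ]; noncomm_ring
        rw [e]; exact mulE _ (ih p hp)
  have mulFpow : ∀ n : ℕ, ∀ p ∈ P, p*ff^n ∈ P := by
    intro n
    induction n with
    | zero => intro p hp; rw [pow_zero, mul_one]; exact hp
    | succ n ih =>
        intro p hp
        have e : p*ff^(n+1) = (p*ff^n)*ff := by rw [pow_succ]; noncomm_ring
        rw [e]; exact mulF _ (ih p hp)
  have mulHpow : ∀ n : ℕ, ∀ p ∈ P, p*hh^n ∈ P := by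
    intro n
    induction n with
    | zero => intro p hp; rw [pow_zero, mul_one]; exact hp
    | succ n ih =>
        intro p hp
        have e : p*hh^(n+1) = (p*hh^n)*hh := by rw [pow_succ]; noncomm_ring
        rw [e]; exact mulH _ (ih p hp)
  have mulP : ∀ p ∈ P, ∀ q ∈ P, p*q ∈ P := by
    intro p hp q hq
    induction hq using Submodule.span_induction with
    | mem x hx =>
        obtain ⟨⟨a,b,c,d⟩, rfl⟩ := hx
        show p*(ee^a*ff^b*hh^c*tt^d) ∈ P
        have e : p*(ee^a*ff^b*hh^c*tt^d) = (((p*ee^a)*ff^b)*hh^c)*tt^d := by noncomm_ring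
        rw [e]; exact mulTpow d _ (mulHpow c _ (mulFpow b _ (mulEpow a _ hp)))
    | zero => rw [mul_zero]; exact P.zero_mem
    | add x y hx hy ihx ihy => rw [mul_add]; exact add_mem ihx ihy
    | smul r x hx ihx => rw [mul_smul_comm]; exact Submodule.smul_mem P r ihx
  have hadj : ∀ a ∈ Algebra.adjoin k ({ee,ff,hh,tt} : Set A), a ∈ P := by
    intro a ha
    induction ha using Algebra.adjoin_induction with
    | mem x hx =>
        simp only [Set.mem_insert_iff, Set.mem_singleton_iff] at hx
        rcases hx with rfl|rfl|rfl|rfl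
        · simpa using hmono 1 0 0 0
        · simpa using hmono 0 1 0 0
        · simpa using hmono 0 0 1 0
        · simpa using hmono 0 0 0 1
    | algebraMap r =>
        have h1 : (1:A) ∈ P := by simpa using hmono 0 0 0 0
        rw [Algebra.algebraMap_eq_smul_one]; exact Submodule.smul_mem P r h1
    | add x y hx hy ihx ihy => exact add_mem ihx ihy
    | mul x y hx hy ihx ihy => exact mulP x ihx y ihy
  -- ===== extraction =====
  have hCmem : (gfa - fga - 2*ffa) ∈ Algebra.adjoin k ({ee,ff,hh,tt} : Set A) := by
    have h2 : (2:A)*ffa ∈ Algebra.adjoin k ({ee,ff,hh,tt} : Set A) := by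
      rw [two_mul]; exact add_mem hffamem hffamem
    exact sub_mem (sub_mem hgfamem hfgamem) h2
  obtain ⟨l, hl⟩ := Finsupp.mem_span_range_iff_exists_finsupp.mp (by
    rw [← hP]; exact hadj _ hCmem)
  obtain ⟨l1, hl1⟩ := Finsupp.mem_span_range_iff_exists_finsupp.mp (by
    rw [← hP]; exact hadj _ (mul_mem hCmem m_ee))
  obtain ⟨l2, hl2⟩ := Finsupp.mem_span_range_iff_exists_finsupp.mp (by
    rw [← hP]; exact hadj _ (mul_mem hCmem m_ff))
  have j1inj : Function.Injective
      (fun m : ℕ×ℕ×ℕ×ℕ => (fun i : Fin 6 => [m.1, m.2.1, m.2.2.1, m.2.2.2, 0, 2].getD i.val 0)) := by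
    rintro ⟨a,b,c,d⟩ ⟨a',b',c',d'⟩ h
    have h0 : a = a' := congrFun h 0
    have h1 : b = b' := congrFun h 1
    have h2 : c = c' := congrFun h 2
    have h3 : d = d' := congrFun h 3
    cases h0; cases h1; cases h2; cases h3; rfl
  have j2inj : Function.Injective
      (fun m : ℕ×ℕ×ℕ×ℕ => (fun i : Fin 6 => [m.1, m.2.1, m.2.2.1, m.2.2.2, 2, 0].getD i.val 0)) := by
    rintro ⟨a,b,c,d⟩ ⟨a',b',c',d'⟩ h
    have h0 : a = a' := congrFun h 0
    have h1 : b = b' := congrFun h 1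
    have h2 : c = c' := congrFun h 2
    have h3 : d = d' := congrFun h 3
    cases h0; cases h1; cases h2; cases h3; rfl
  have j3inj : Function.Injective
      (fun m : ℕ×ℕ×ℕ×ℕ => (fun i : Fin 6 => [m.1, m.2.1, m.2.2.1 + 1, m.2.2.2, 1, 1].getD i.val 0)) := by
    rintro ⟨a,b,c,d⟩ ⟨a',b',c',d'⟩ h
    have h0 : a = a' := congrFun h 0
    have h1 : b = b' := congrFun h 1
    have h2 : c + 1 = c' + 1 := congrFun h 2
    have h3 : d = d' := congrFun h 3
    cases h0; cases h1; cases (Nat.succ_injective h2); cases h3; rfl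
  have keyF1 : (fun (i : ℕ×ℕ×ℕ×ℕ) (r : k) => r • (fun m : Fin 6 → ℕ => ee ^ m 0 * ff ^ m 1 * hh ^ m 2 * tt ^ m 3 * xx ^ m 4 * yy ^ m 5) ((⟨(fun m : ℕ×ℕ×ℕ×ℕ => (fun i : Fin 6 => [m.1, m.2.1, m.2.2.1, m.2.2.2, 0, 2].getD i.val 0)), j1inj⟩ : (ℕ×ℕ×ℕ×ℕ) ↪ (Fin 6 → ℕ)) i))
      = (fun (i : ℕ×ℕ×ℕ×ℕ) (r : k) =>
          (r • (ee^i.1*ff^i.2.1*hh^i.2.2.1*tt^i.2.2.2))*(yy*yy)) := by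
    funext i r
    show r • (ee^i.1*ff^i.2.1*hh^i.2.2.1*tt^i.2.2.2*xx^(0:ℕ)*yy^(2:ℕ))
        = (r • (ee^i.1*ff^i.2.1*hh^i.2.2.1*tt^i.2.2.2))*(yy*yy)
    rw [smul_mul_assoc]
    exact congrArg (fun z => r • z) (by noncomm_ring)
  have keyF2 : (fun (i : ℕ×ℕ×ℕ×ℕ) (r : k) => r • (fun m : Fin 6 → ℕ => ee ^ m 0 * ff ^ m 1 * hh ^ m 2 * tt ^ m 3 * xx ^ m 4 * yy ^ m 5) ((⟨(fun m : ℕ×ℕ×ℕ×ℕ => (fun i : Fin 6 => [m.1, m.2.1, m.2.2.1, m.2.2.2, 2, 0].getD i.val 0)), j2inj⟩ : (ℕ×ℕ×ℕ×ℕ) ↪ (Fin 6 → ℕ)) i))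
      = (fun (i : ℕ×ℕ×ℕ×ℕ) (r : k) =>
          (r • (ee^i.1*ff^i.2.1*hh^i.2.2.1*tt^i.2.2.2))*(xx*xx)) := by
    funext i r
    show r • (ee^i.1*ff^i.2.1*hh^i.2.2.1*tt^i.2.2.2*xx^(2:ℕ)*yy^(0:ℕ))
        = (r • (ee^i.1*ff^i.2.1*hh^i.2.2.1*tt^i.2.2.2))*(xx*xx)
    rw [smul_mul_assoc]
    exact congrArg (fun z => r • z) (by noncomm_ring)
  have keyF3 : (fun (i : ℕ×ℕ×ℕ×ℕ) (r : k) => r • (fun m : Fin 6 → ℕ => ee ^ m 0 * ff ^ m 1 * hh ^ m 2 * tt ^ m 3 * xx ^ m 4 * yy ^ m 5) ((⟨(fun m : ℕ×ℕ×ℕ×ℕ => (fun i : Fin 6 => [m.1, m.2.1, m.2.2.1 + 1, m.2.2.2, 1, 1].getD i.val 0)), j3inj⟩ : (ℕ×ℕ×ℕ×ℕ) ↪ (Fin 6 → ℕ)) i))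
      = (fun (i : ℕ×ℕ×ℕ×ℕ) (r : k) =>
          ((r • (ee^i.1*ff^i.2.1*hh^i.2.2.1*tt^i.2.2.2))*hh)*(xx*yy)) := by
    funext i r
    show r • (ee^i.1*ff^i.2.1*hh^(i.2.2.1+1)*tt^i.2.2.2*xx^(1:ℕ)*yy^(1:ℕ))
        = ((r • (ee^i.1*ff^i.2.1*hh^i.2.2.1*tt^i.2.2.2))*hh)*(xx*yy)
    rw [smul_mul_assoc, smul_mul_assoc, eqH i.1 i.2.1 i.2.2.1 i.2.2.2]
    exact congrArg (fun z => r • z) (by noncomm_ring)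
  have hLC : Finsupp.linearCombination k (fun m : Fin 6 → ℕ => ee ^ m 0 * ff ^ m 1 * hh ^ m 2 * tt ^ m 3 * xx ^ m 4 * yy ^ m 5) (Finsupp.embDomain (⟨(fun m : ℕ×ℕ×ℕ×ℕ => (fun i : Fin 6 => [m.1, m.2.1, m.2.2.1, m.2.2.2, 0, 2].getD i.val 0)), j1inj⟩ : (ℕ×ℕ×ℕ×ℕ) ↪ (Fin 6 → ℕ)) l1 - Finsupp.embDomain (⟨(fun m : ℕ×ℕ×ℕ×ℕ => (fun i : Fin 6 => [m.1, m.2.1, m.2.2.1, m.2.2.2, 2, 0].getD i.val 0)), j2inj⟩ : (ℕ×ℕ×ℕ×ℕ) ↪ (Fin 6 → ℕ)) l2 + Finsupp.embDomain (⟨(fun m : ℕ×ℕ×ℕ×ℕ => (fun i : Fin 6 => [m.1, m.2.1, m.2.2.1 + 1, m.2.2.2, 1, 1].getD i.val 0)), j3inj⟩ : (ℕ×ℕ×ℕ×ℕ) ↪ (Fin 6 → ℕ)) l) = 0 := by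
    rw [map_add, map_sub, Finsupp.linearCombination_embDomain,
      Finsupp.linearCombination_embDomain, Finsupp.linearCombination_embDomain,
      Finsupp.linearCombination_apply, Finsupp.linearCombination_apply,
      Finsupp.linearCombination_apply]
    have s1 : (Finsupp.sum l1 fun i r => r • ((fun m : Fin 6 → ℕ => ee ^ m 0 * ff ^ m 1 * hh ^ m 2 * tt ^ m 3 * xx ^ m 4 * yy ^ m 5) ∘ (⟨(fun m : ℕ×ℕ×ℕ×ℕ => (fun i : Fin 6 => [m.1, m.2.1, m.2.2.1, m.2.2.2, 0, 2].getD i.val 0)), j1inj⟩ : (ℕ×ℕ×ℕ×ℕ) ↪ (Fin 6 → ℕ))) i) = ((gfa - fga - 2*ffa)*ee)*(yy*yy) := by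
      simp only [Function.comp]
      rw [keyF1, ← Finsupp.sum_mul, hl1]
    have s2 : (Finsupp.sum l2 fun i r => r • ((fun m : Fin 6 → ℕ => ee ^ m 0 * ff ^ m 1 * hh ^ m 2 * tt ^ m 3 * xx ^ m 4 * yy ^ m 5) ∘ (⟨(fun m : ℕ×ℕ×ℕ×ℕ => (fun i : Fin 6 => [m.1, m.2.1, m.2.2.1, m.2.2.2, 2, 0].getD i.val 0)), j2inj⟩ : (ℕ×ℕ×ℕ×ℕ) ↪ (Fin 6 → ℕ))) i) = ((gfa - fga - 2*ffa)*ff)*(xx*xx) := by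
      simp only [Function.comp]
      rw [keyF2, ← Finsupp.sum_mul, hl2]
    have s3 : (Finsupp.sum l fun i r => r • ((fun m : Fin 6 → ℕ => ee ^ m 0 * ff ^ m 1 * hh ^ m 2 * tt ^ m 3 * xx ^ m 4 * yy ^ m 5) ∘ (⟨(fun m : ℕ×ℕ×ℕ×ℕ => (fun i : Fin 6 => [m.1, m.2.1, m.2.2.1 + 1, m.2.2.2, 1, 1].getD i.val 0)), j3inj⟩ : (ℕ×ℕ×ℕ×ℕ) ↪ (Fin 6 → ℕ))) i) = ((gfa - fga - 2*ffa)*hh)*(xx*yy) := by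
      simp only [Function.comp]
      rw [keyF3, ← Finsupp.sum_mul, ← Finsupp.sum_mul, hl]
    rw [s1, s2, s3]
    exact hT
  have hL0 : (Finsupp.embDomain (⟨(fun m : ℕ×ℕ×ℕ×ℕ => (fun i : Fin 6 => [m.1, m.2.1, m.2.2.1, m.2.2.2, 0, 2].getD i.val 0)), j1inj⟩ : (ℕ×ℕ×ℕ×ℕ) ↪ (Fin 6 → ℕ)) l1 - Finsupp.embDomain (⟨(fun m : ℕ×ℕ×ℕ×ℕ => (fun i : Fin 6 => [m.1, m.2.1, m.2.2.1, m.2.2.2, 2, 0].getD i.val 0)), j2inj⟩ : (ℕ×ℕ×ℕ×ℕ) ↪ (Fin 6 → ℕ)) l2 + Finsupp.embDomain (⟨(fun m : ℕ×ℕ×ℕ×ℕ => (fun i : Fin 6 => [m.1, m.2.1, m.2.2.1 + 1, m.2.2.2, 1, 1].getD i.val 0)), j3inj⟩ : (ℕ×ℕ×ℕ×ℕ) ↪ (Fin 6 → ℕ)) l) = 0 := linearIndependent_iff.mp hPBW _ hLC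
  have hlz : ∀ m : ℕ×ℕ×ℕ×ℕ, l m = 0 := by
    intro m
    have hv := DFunLike.congr_fun hL0 ((⟨(fun m : ℕ×ℕ×ℕ×ℕ => (fun i : Fin 6 => [m.1, m.2.1, m.2.2.1 + 1, m.2.2.2, 1, 1].getD i.val 0)), j3inj⟩ : (ℕ×ℕ×ℕ×ℕ) ↪ (Fin 6 → ℕ)) m)
    rw [Finsupp.add_apply, Finsupp.sub_apply, Finsupp.embDomain_apply_self] at hv
    have e1z : (Finsupp.embDomain (⟨(fun m : ℕ×ℕ×ℕ×ℕ => (fun i : Fin 6 => [m.1, m.2.1, m.2.2.1, m.2.2.2, 0, 2].getD i.val 0)), j1inj⟩ : (ℕ×ℕ×ℕ×ℕ) ↪ (Fin 6 → ℕ)) l1) ((⟨(fun m : ℕ×ℕ×ℕ×ℕ => (fun i : Fin 6 => [m.1, m.2.1, m.2.2.1 + 1, m.2.2.2, 1, 1].getD i.val 0)), j3inj⟩ : (ℕ×ℕ×ℕ×ℕ) ↪ (Fin 6 → ℕ)) m) = 0 := by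
      apply Finsupp.embDomain_notin_range
      rintro ⟨m', hm'⟩
      have hx : (0:ℕ) = 1 := congrFun hm' 4
      exact absurd hx (by norm_num)
    have e2z : (Finsupp.embDomain (⟨(fun m : ℕ×ℕ×ℕ×ℕ => (fun i : Fin 6 => [m.1, m.2.1, m.2.2.1, m.2.2.2, 2, 0].getD i.val 0)), j2inj⟩ : (ℕ×ℕ×ℕ×ℕ) ↪ (Fin 6 → ℕ)) l2) ((⟨(fun m : ℕ×ℕ×ℕ×ℕ => (fun i : Fin 6 => [m.1, m.2.1, m.2.2.1 + 1, m.2.2.2, 1, 1].getD i.val 0)), j3inj⟩ : (ℕ×ℕ×ℕ×ℕ) ↪ (Fin 6 → ℕ)) m) = 0 := by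
      apply Finsupp.embDomain_notin_range
      rintro ⟨m', hm'⟩
      have hx : (2:ℕ) = 1 := congrFun hm' 4
      exact absurd hx (by norm_num)
    rw [e1z, e2z] at hv
    simpa using hv
  have hC0 : gfa - fga - 2*ffa = 0 := by
    rw [← hl]
    have : l = 0 := Finsupp.ext hlz
    rw [this, Finsupp.sum_zero_index]
  have hfin : gfa - (fga + 2*ffa) = 0 := by rw [sub_add_eq_sub_sub]; exact hC0
  exact sub_eq_zero.mp hfin
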